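/- Given λ_+ > λ_− > 0, C > 0 and α ∈ (0,1), there exists a constant A > 1 such that the following holds: if (λ_n) and (λ̂_n) are sequences in [λ_−, λ_+] satisfying |λ_n − λ̂_n| < C·α^n for all n, then the affine compositions G_n = g_n ∘ ⋯ ∘ g_1 and Ĝ_n = ĝ_n ∘ ⋯ ∘ ĝ_1 satisfy 1/A ≤ |G_n'/Ĝ_n'| ≤ A for all n. -/

import Mathlib

noncomputable section

/-- The orbit of a starting value `w₀` under the non-autonomous dynamical system given by
the Möbius maps `f_{λ_n}(z) = λ_n/(1+z)`: `w_n = f_{λ_n}(w_{n-1})`. -/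
def orbit (lams : ℕ → ℝ) (w0 : ℂ) : ℕ → ℂ
  | 0 => w0
  | n + 1 => (lams (n + 1) : ℂ) / (1 + orbit lams w0 n)

/-- The affine map `g_n = φ_n ∘ f_{λ_n} ∘ φ_{n−1}⁻¹`, where `φ_n(z) = 1/(z − w_n)` is the
change of coordinates along the orbit `(w_n)`; explicitly
`g_n(ζ) = −(1 + (w_{n−1}+1)ζ)/w_n`. -/
def gmap (lams : ℕ → ℝ) (w0 : ℂ) (n : ℕ) (z : ℂ) : ℂ :=
  -(1 + (orbit lams w0 (n - 1) + 1) * z) / orbit lams w0 n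

/-- The composition `G_n = g_n ∘ ⋯ ∘ g_1` of the affine maps `g_i`. -/
def Gmap (lams : ℕ → ℝ) (w0 : ℂ) : ℕ → ℂ → ℂ
  | 0 => id
  | n + 1 => gmap lams w0 (n + 1) ∘ Gmap lams w0 n

namespace CorAux

variable {lamm lamp C α : ℝ} {lams lams' : ℕ → ℝ} {w0 w0' : ℂ}

/-- `1 + w_n ≠ 0`. -/
lemma one_add_ne (hre : ∀ n, (orbit lams w0 n).re < 0) (n : ℕ) :
    1 + orbit lams w0 n ≠ 0 := by
  intro h
  have h1 := hre (n + 1)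
  rw [show orbit lams w0 (n+1) = (lams (n+1) : ℂ) / (1 + orbit lams w0 n) from rfl,
    h, div_zero] at h1
  simp at h1

/-- key identity `w_{n+1} (1 + w_n) = λ_{n+1}`. -/
lemma key (hre : ∀ n, (orbit lams w0 n).re < 0) (n : ℕ) :
    orbit lams w0 (n + 1) * (1 + orbit lams w0 n) = (lams (n + 1) : ℂ) := by
  rw [show orbit lams w0 (n+1) = (lams (n+1) : ℂ) / (1 + orbit lams w0 n) from rfl]
  field_simp [one_add_ne hre n]

/-- `Re w_n < -1`. -/
lemma re_lt_neg_one (h0 : 0 < lamm) (hlam : ∀ n, 1 ≤ n → lams n ∈ Set.Icc lamm lamp)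
    (hre : ∀ n, (orbit lams w0 n).re < 0) (n : ℕ) :
    (orbit lams w0 n).re < -1 := by
  have h1 := hre (n + 1)
  have hlpos : (0:ℝ) < lams (n+1) := lt_of_lt_of_le h0 (hlam (n+1) (by omega)).1
  rw [show orbit lams w0 (n+1) = (lams (n+1) : ℂ) / (1 + orbit lams w0 n) from rfl] at h1
  rw [Complex.div_re] at h1
  have hnsq : 0 < Complex.normSq (1 + orbit lams w0 n) :=
    Complex.normSq_pos.2 (one_add_ne hre n)
  simp only [Complex.ofReal_re, Complex.ofReal_im, zero_mul, add_zero, zero_div] at h1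
  have h2 : (1 + orbit lams w0 n).re < 0 := by
    by_contra hc
    push_neg at hc
    have : 0 ≤ lams (n+1) * (1 + orbit lams w0 n).re / Complex.normSq (1 + orbit lams w0 n) := by
      positivity
    linarith
  have : (1 + orbit lams w0 n).re = 1 + (orbit lams w0 n).re := by simp
  linarith [this ▸ h2]

/-- `‖1+w_n‖² + 1 ≤ ‖w_n‖²` -/
lemma normsq_ineq (h0 : 0 < lamm) (hlam : ∀ n, 1 ≤ n → lams n ∈ Set.Icc lamm lamp)
    (hre : ∀ n, (orbit lams w0 n).re < 0) (n : ℕ) :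
    ‖1 + orbit lams w0 n‖ ^ 2 + 1 ≤ ‖orbit lams w0 n‖ ^ 2 := by
  have h1 := re_lt_neg_one h0 hlam hre n
  set w := orbit lams w0 n with hw
  have e1 : ‖1 + w‖ ^ 2 = (1 + w.re)^2 + w.im^2 := by
    rw [Complex.sq_norm, Complex.normSq_apply]; simp; ring
  have e2 : ‖w‖ ^ 2 = w.re^2 + w.im^2 := by
    rw [Complex.sq_norm, Complex.normSq_apply]; ring
  nlinarith

lemma a_ge_one (h0 : 0 < lamm) (hlam : ∀ n, 1 ≤ n → lams n ∈ Set.Icc lamm lamp)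
    (hre : ∀ n, (orbit lams w0 n).re < 0) (n : ℕ) :
    1 ≤ ‖orbit lams w0 n‖ := by
  have := normsq_ineq h0 hlam hre n
  nlinarith [norm_nonneg (1 + orbit lams w0 n), norm_nonneg (orbit lams w0 n)]

lemma key_norm (h0 : 0 < lamm) (hlam : ∀ n, 1 ≤ n → lams n ∈ Set.Icc lamm lamp)
    (hre : ∀ n, (orbit lams w0 n).re < 0) (n : ℕ) :
    ‖orbit lams w0 (n + 1)‖ * ‖1 + orbit lams w0 n‖ = lams (n + 1) := by
  have h := congrArg norm (key hre n)
  have hpos : (0:ℝ) < lams (n+1) := lt_of_lt_of_le h0 (hlam (n+1) (by omega)).1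
  rw [norm_mul, Complex.norm_real, Real.norm_eq_abs, abs_of_pos hpos] at h
  simpa using h

lemma b_le (h0 : 0 < lamm) (hlam : ∀ n, 1 ≤ n → lams n ∈ Set.Icc lamm lamp)
    (hre : ∀ n, (orbit lams w0 n).re < 0) (n : ℕ) :
    ‖1 + orbit lams w0 n‖ ≤ lamp := by
  have h := key_norm h0 hlam hre n
  have ha := a_ge_one h0 hlam hre (n+1)
  have h2 := (hlam (n+1) (by omega)).2
  nlinarith [norm_nonneg (1 + orbit lams w0 n)]

lemma a_le (h0 : 0 < lamm) (hlam : ∀ n, 1 ≤ n → lams n ∈ Set.Icc lamm lamp)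
    (hre : ∀ n, (orbit lams w0 n).re < 0) (n : ℕ) :
    ‖orbit lams w0 n‖ ≤ 1 + lamp := by
  have h := b_le h0 hlam hre n
  calc ‖orbit lams w0 n‖ = ‖(1 + orbit lams w0 n) + (-1)‖ := by ring_nf
    _ ≤ ‖1 + orbit lams w0 n‖ + ‖(-1 : ℂ)‖ := norm_add_le _ _
    _ ≤ lamp + 1 := by simpa using h
    _ = 1 + lamp := by ring

lemma b_ge (h0 : 0 < lamm) (hlam : ∀ n, 1 ≤ n → lams n ∈ Set.Icc lamm lamp)
    (hre : ∀ n, (orbit lams w0 n).re < 0) (n : ℕ) :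
    lamm / (1 + lamp) ≤ ‖1 + orbit lams w0 n‖ := by
  have h := key_norm h0 hlam hre n
  have ha := a_le h0 hlam hre (n+1)
  have ha1 := a_ge_one h0 hlam hre (n+1)
  have h1 := (hlam (n+1) (by omega)).1
  have hP : (0:ℝ) < 1 + lamp := by linarith
  rw [div_le_iff₀ hP]
  nlinarith [norm_nonneg (1 + orbit lams w0 n)]

lemma b_le_beta (h0 : 0 < lamm) (hlam : ∀ n, 1 ≤ n → lams n ∈ Set.Icc lamm lamp)
    (hre : ∀ n, (orbit lams w0 n).re < 0) (n : ℕ) :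
    ‖1 + orbit lams w0 n‖ ≤ Real.sqrt (1 - ((1+lamp)^2)⁻¹) * ‖orbit lams w0 n‖ := by
  have hsq := normsq_ineq h0 hlam hre n
  have ha := a_le h0 hlam hre n
  have ha1 := a_ge_one h0 hlam hre n
  have hlp : lamm ≤ lamp := le_trans (hlam 1 le_rfl).1 (hlam 1 le_rfl).2
  have hP : (0:ℝ) < 1 + lamp := by nlinarith
  have hβnn : (0:ℝ) ≤ 1 - ((1+lamp)^2)⁻¹ := by
    have h2 : ((1+lamp)^2)⁻¹ ≤ 1 := by
      rw [inv_le_one_iff₀]; right; nlinarith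
    linarith
  have key : ‖1 + orbit lams w0 n‖ ^ 2 ≤ (1 - ((1+lamp)^2)⁻¹) * ‖orbit lams w0 n‖ ^ 2 := by
    have h1 : ‖orbit lams w0 n‖ ^ 2 * ((1+lamp)^2)⁻¹ ≤ 1 := by
      rw [← div_eq_mul_inv, div_le_one (pow_pos hP 2)]
      nlinarith
    nlinarith
  calc ‖1 + orbit lams w0 n‖ = Real.sqrt (‖1 + orbit lams w0 n‖ ^ 2) := by
        rw [Real.sqrt_sq (norm_nonneg _)]
    _ ≤ Real.sqrt ((1 - ((1+lamp)^2)⁻¹) * ‖orbit lams w0 n‖ ^ 2) := Real.sqrt_le_sqrt key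
    _ = Real.sqrt (1 - ((1+lamp)^2)⁻¹) * ‖orbit lams w0 n‖ := by
        rw [Real.sqrt_mul hβnn, Real.sqrt_sq (norm_nonneg _)]

/-- the backward-difference identity -/
lemma diff_identity (hre : ∀ n, (orbit lams w0 n).re < 0)
    (hre' : ∀ n, (orbit lams' w0' n).re < 0) (n : ℕ) :
    (orbit lams w0 n - orbit lams' w0' n) * orbit lams w0 (n+1) * orbit lams' w0' (n+1)
      = ((lams (n+1) : ℂ) - (lams' (n+1) : ℂ)) * orbit lams' w0' (n+1)
        + (lams' (n+1) : ℂ) * (orbit lams' w0' (n+1) - orbit lams w0 (n+1)) := by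
  linear_combination (key hre n) * orbit lams' w0' (n+1)
    - (key hre' n) * orbit lams w0 (n+1)

/-- the backward norm recurrence -/
lemma step_norm (h0 : 0 < lamm)
    (hlam : ∀ n, 1 ≤ n → lams n ∈ Set.Icc lamm lamp)
    (hlam' : ∀ n, 1 ≤ n → lams' n ∈ Set.Icc lamm lamp)
    (hre : ∀ n, (orbit lams w0 n).re < 0)
    (hre' : ∀ n, (orbit lams' w0' n).re < 0) (n : ℕ) :
    ‖orbit lams w0 n - orbit lams' w0' n‖ * ‖orbit lams w0 (n+1)‖
      ≤ |lams (n+1) - lams' (n+1)|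
        + ‖1 + orbit lams' w0' n‖ * ‖orbit lams w0 (n+1) - orbit lams' w0' (n+1)‖ := by
  have hid := diff_identity hre hre' n
  have hnorm := congrArg norm hid
  rw [norm_mul, norm_mul] at hnorm
  have htri : ‖((lams (n+1) : ℂ) - (lams' (n+1) : ℂ)) * orbit lams' w0' (n+1)
        + (lams' (n+1) : ℂ) * (orbit lams' w0' (n+1) - orbit lams w0 (n+1))‖
      ≤ |lams (n+1) - lams' (n+1)| * ‖orbit lams' w0' (n+1)‖
        + lams' (n+1) * ‖orbit lams w0 (n+1) - orbit lams' w0' (n+1)‖ := by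
    refine (norm_add_le _ _).trans (le_of_eq ?_)
    rw [norm_mul, norm_mul, ← Complex.ofReal_sub, Complex.norm_real, Real.norm_eq_abs,
      Complex.norm_real, Real.norm_eq_abs,
      abs_of_pos (lt_of_lt_of_le h0 (hlam' (n+1) (by omega)).1), norm_sub_rev]
  have hkey' := key_norm h0 hlam' hre' n
  set a1 := ‖orbit lams w0 (n+1)‖
  set a1' := ‖orbit lams' w0' (n+1)‖
  set b' := ‖1 + orbit lams' w0' n‖
  set d0 := ‖orbit lams w0 n - orbit lams' w0' n‖
  set d1 := ‖orbit lams w0 (n+1) - orbit lams' w0' (n+1)‖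
  have ha1' : 1 ≤ a1' := a_ge_one h0 hlam' hre' (n+1)
  have h2 : d0 * a1 * a1' ≤ (|lams (n+1) - lams' (n+1)| + b' * d1) * a1' := by
    rw [hnorm]
    calc _ ≤ |lams (n+1) - lams' (n+1)| * a1' + lams' (n+1) * d1 := htri
      _ = (|lams (n+1) - lams' (n+1)| + b' * d1) * a1' := by rw [← hkey']; ring
  exact le_of_mul_le_mul_right h2 (by linarith)

/-- exponential closeness of the two orbits. -/
lemma delta_le (h0 : 0 < lamm) (hmp : lamm < lamp) (hC : 0 < C)
    (hα : α ∈ Set.Ioo (0 : ℝ) 1)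
    (hlam : ∀ n, 1 ≤ n → lams n ∈ Set.Icc lamm lamp)
    (hlam' : ∀ n, 1 ≤ n → lams' n ∈ Set.Icc lamm lamp)
    (hdiff : ∀ n, 1 ≤ n → |lams n - lams' n| < C * α ^ n)
    (hre : ∀ n, (orbit lams w0 n).re < 0)
    (hre' : ∀ n, (orbit lams' w0' n).re < 0) (n : ℕ) :
    ‖orbit lams w0 n - orbit lams' w0' n‖
      ≤ (1 + lamp) * (C * max α (Real.sqrt (1 - ((1+lamp)^2)⁻¹))
          / (1 - max α (Real.sqrt (1 - ((1+lamp)^2)⁻¹))))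
        * (max α (Real.sqrt (1 - ((1+lamp)^2)⁻¹))) ^ n := by
  have hlamp : 0 < lamp := h0.trans hmp
  set β := Real.sqrt (1 - ((1+lamp)^2)⁻¹) with hβ
  have hβ0 : 0 ≤ β := Real.sqrt_nonneg _
  have hβ1 : β < 1 := by
    rw [hβ]
    refine (Real.sqrt_lt' one_pos).2 ?_
    have : 0 < ((1+lamp)^2)⁻¹ := by positivity
    nlinarith
  set γ := max α β with hγ
  have hγ0 : 0 < γ := lt_of_lt_of_le hα.1 (le_max_left _ _)
  have hγ1 : γ < 1 := max_lt hα.2 hβ1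
  have hα0 : 0 < α := hα.1
  set K₁ := C * γ / (1 - γ) with hK₁
  have hK₁pos : 0 < K₁ := by
    apply div_pos (by positivity); linarith
  set P := 1 + lamp with hP
  have hPpos : (0:ℝ) < P := by rw [hP]; linarith
  have main : ∀ j n : ℕ,
      ‖orbit lams w0 n - orbit lams' w0' n‖ ≤ (K₁ * γ^n + 2*P*β^j) * ‖orbit lams' w0' n‖ ∧
      ‖orbit lams w0 n - orbit lams' w0' n‖ ≤ (K₁ * γ^n + 2*P*β^j) * ‖orbit lams w0 n‖ := by
    intro j
    induction j with
    | zero =>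
      intro n
      have hd : ‖orbit lams w0 n - orbit lams' w0' n‖ ≤ 2 * P := by
        calc ‖orbit lams w0 n - orbit lams' w0' n‖
            ≤ ‖orbit lams w0 n‖ + ‖orbit lams' w0' n‖ := norm_sub_le _ _
          _ ≤ 2 * P := by
              have e1 := a_le h0 hlam hre n; have e2 := a_le h0 hlam' hre' n
              rw [hP]; linarith
      have hbase : ∀ a : ℝ, 1 ≤ a →
          ‖orbit lams w0 n - orbit lams' w0' n‖ ≤ (K₁ * γ^n + 2*P*β^0) * a := by
        intro a ha
        rw [pow_zero, mul_one]
        have h1 : (0:ℝ) ≤ K₁*γ^n := by positivity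
        calc ‖orbit lams w0 n - orbit lams' w0' n‖ ≤ 2*P := hd
          _ ≤ (K₁*γ^n + 2*P) * 1 := by rw [mul_one]; linarith
          _ ≤ (K₁*γ^n + 2*P) * a := by
              apply mul_le_mul_of_nonneg_left ha; linarith
      exact ⟨hbase _ (a_ge_one h0 hlam' hre' n), hbase _ (a_ge_one h0 hlam hre n)⟩
    | succ j ih =>
      intro n
      have hα' := le_of_lt (hdiff (n+1) (by omega))
      have hαγn : α^(n+1) ≤ γ^(n+1) :=
        pow_le_pow_left₀ (le_of_lt hα0) (le_max_left _ _) _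
      have hcoefeq : C * γ^(n+1) + K₁ * γ^(n+1) = K₁ * γ^n := by
        have h1γ : (1:ℝ) - γ ≠ 0 := by linarith
        rw [hK₁]
        field_simp
        ring
      have hside : ∀ (mu mu' : ℕ → ℝ) (z z' : ℂ),
          (∀ k, 1 ≤ k → mu k ∈ Set.Icc lamm lamp) →
          (∀ k, 1 ≤ k → mu' k ∈ Set.Icc lamm lamp) →
          (∀ k, (orbit mu z k).re < 0) →
          (∀ k, (orbit mu' z' k).re < 0) →
          |mu (n+1) - mu' (n+1)| ≤ C * α^(n+1) →
          ‖orbit mu z (n+1) - orbit mu' z' (n+1)‖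
            ≤ (K₁ * γ^(n+1) + 2*P*β^j) * ‖orbit mu z (n+1)‖ →
          ‖orbit mu z n - orbit mu' z' n‖
            ≤ (K₁ * γ^n + 2*P*β^(j+1)) * ‖orbit mu' z' n‖ := by
        intro mu mu' z z' hm hm' hr hr' hdd hih
        have hstep := step_norm h0 hm hm' hr hr' n
        have hbβ : ‖1 + orbit mu' z' n‖ ≤ β * ‖orbit mu' z' n‖ := b_le_beta h0 hm' hr' n
        have ha1 : 1 ≤ ‖orbit mu z (n+1)‖ := a_ge_one h0 hm hr (n+1)
        have han' : 1 ≤ ‖orbit mu' z' n‖ := a_ge_one h0 hm' hr' n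
        set d0 := ‖orbit mu z n - orbit mu' z' n‖
        set d1 := ‖orbit mu z (n+1) - orbit mu' z' (n+1)‖
        set a1 := ‖orbit mu z (n+1)‖
        set an' := ‖orbit mu' z' n‖
        set b' := ‖1 + orbit mu' z' n‖
        set X := K₁ * γ^(n+1) + 2*P*β^j with hX
        have hXnn : (0:ℝ) ≤ X := by positivity
        have t1 : b' * d1 ≤ (β * an') * (X * a1) :=
          mul_le_mul hbβ hih (norm_nonneg _) (mul_nonneg hβ0 (norm_nonneg _))
        have t2 : d0 * a1 ≤ C*α^(n+1) + (β*an')*(X*a1) :=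
          hstep.trans (add_le_add hdd t1)
        have t3 : C*α^(n+1) ≤ (C*α^(n+1))*a1 :=
          le_mul_of_one_le_right (by positivity) ha1
        have h2 : d0 * a1 ≤ (C*α^(n+1) + β*an'*X)*a1 := by
          have expand : (C*α^(n+1) + β*an'*X)*a1 = C*α^(n+1)*a1 + (β*an')*(X*a1) := by ring
          rw [expand]; linarith
        have h4 : d0 ≤ C*α^(n+1) + β*an'*X :=
          le_of_mul_le_mul_right h2 (lt_of_lt_of_le one_pos ha1)
        have m1 : C*α^(n+1) ≤ C*γ^(n+1)*an' := by
          calc C*α^(n+1) ≤ C*γ^(n+1) := mul_le_mul_of_nonneg_left hαγn (le_of_lt hC)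
            _ ≤ C*γ^(n+1)*an' := le_mul_of_one_le_right (by positivity) han'
        have m2 : β*(K₁*γ^(n+1)*an') ≤ 1*(K₁*γ^(n+1)*an') :=
          mul_le_mul_of_nonneg_right (le_of_lt hβ1) (by positivity)
        calc d0 ≤ C*α^(n+1) + β*an'*X := h4
          _ ≤ C*γ^(n+1)*an' + β*an'*X := by linarith
          _ = C*γ^(n+1)*an' + β*(K₁*γ^(n+1)*an') + 2*P*β^(j+1)*an' := by rw [hX]; ring
          _ ≤ C*γ^(n+1)*an' + 1*(K₁*γ^(n+1)*an') + 2*P*β^(j+1)*an' := by linarith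
          _ = (C*γ^(n+1) + K₁*γ^(n+1))*an' + 2*P*β^(j+1)*an' := by ring
          _ = K₁*γ^n*an' + 2*P*β^(j+1)*an' := by rw [hcoefeq]
          _ = (K₁ * γ^n + 2*P*β^(j+1)) * an' := by ring
      constructor
      · exact hside lams lams' w0 w0' hlam hlam' hre hre' hα' (ih (n+1)).2
      · have hdd' : |lams' (n+1) - lams (n+1)| ≤ C * α^(n+1) := by
          rw [abs_sub_comm]; exact hα'
        have hih' : ‖orbit lams' w0' (n+1) - orbit lams w0 (n+1)‖
            ≤ (K₁ * γ^(n+1) + 2*P*β^j) * ‖orbit lams' w0' (n+1)‖ := by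
          rw [norm_sub_rev]; exact (ih (n+1)).1
        have := hside lams' lams w0' w0 hlam' hlam hre' hre hdd' hih'
        rw [norm_sub_rev]; exact this
  have hlim : Filter.Tendsto (fun j : ℕ => (K₁ * γ^n + 2*P*β^j) * ‖orbit lams' w0' n‖)
      Filter.atTop (nhds ((K₁ * γ^n + 2*P*0) * ‖orbit lams' w0' n‖)) := by
    exact (((tendsto_pow_atTop_nhds_zero_of_lt_one hβ0 hβ1).const_mul (2*P)).const_add
      (K₁ * γ^n)).mul_const _
  have h5 : ‖orbit lams w0 n - orbit lams' w0' n‖ ≤ (K₁ * γ^n + 2*P*0) * ‖orbit lams' w0' n‖ :=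
    ge_of_tendsto' hlim (fun j => (main j n).1)
  have han' := a_le h0 hlam' hre' n
  have hend : (K₁ * γ^n + 2*P*0) * ‖orbit lams' w0' n‖ ≤ P * K₁ * γ^n := by
    rw [mul_zero, add_zero]
    calc K₁ * γ^n * ‖orbit lams' w0' n‖ ≤ K₁ * γ^n * P := by
          apply mul_le_mul_of_nonneg_left _ (by positivity)
          rw [hP]; exact han'
      _ = P * K₁ * γ^n := by ring
  calc ‖orbit lams w0 n - orbit lams' w0' n‖ ≤ P * K₁ * γ^n := h5.trans hend
    _ = P * (C * γ / (1 - γ)) * γ ^ n := by rw [hK₁]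

/-- the derivative of `G_n` -/
def Dc (lams : ℕ → ℝ) (w0 : ℂ) : ℕ → ℂ
  | 0 => 1
  | n + 1 => -(orbit lams w0 n + 1) / orbit lams w0 (n + 1) * Dc lams w0 n

lemma hasDerivAt_gmap (lams : ℕ → ℝ) (w0 : ℂ) (n : ℕ) (y : ℂ) :
    HasDerivAt (gmap lams w0 n) (-(orbit lams w0 (n-1) + 1) / orbit lams w0 n) y := by
  have h := (((hasDerivAt_id y).const_mul (orbit lams w0 (n-1) + 1)).const_add 1).neg.div_const
    (orbit lams w0 n)
  have hfun : gmap lams w0 n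
      = fun x => -(1 + (orbit lams w0 (n-1) + 1) * x) / orbit lams w0 n := rfl
  rw [hfun]
  simpa using h

lemma hasDerivAt_Gmap (lams : ℕ → ℝ) (w0 : ℂ) (n : ℕ) (y : ℂ) :
    HasDerivAt (Gmap lams w0 n) (Dc lams w0 n) y := by
  induction n generalizing y with
  | zero => simpa [Gmap, Dc] using hasDerivAt_id y
  | succ n ih =>
    have h := (hasDerivAt_gmap lams w0 (n+1) (Gmap lams w0 n y)).comp y (ih y)
    simpa [Gmap, Dc] using h

lemma deriv_Gmap (lams : ℕ → ℝ) (w0 : ℂ) (n : ℕ) :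
    deriv (Gmap lams w0 n) 0 = Dc lams w0 n :=
  (hasDerivAt_Gmap lams w0 n 0).deriv

lemma norm_Dc_succ (n : ℕ) (h1 : orbit lams w0 (n+1) ≠ 0) :
    ‖Dc lams w0 (n+1)‖ * ‖orbit lams w0 (n+1)‖ = ‖1 + orbit lams w0 n‖ * ‖Dc lams w0 n‖ := by
  have : Dc lams w0 (n+1) * orbit lams w0 (n+1) = -(orbit lams w0 n + 1) * Dc lams w0 n := by
    rw [show Dc lams w0 (n+1)
      = -(orbit lams w0 n + 1) / orbit lams w0 (n + 1) * Dc lams w0 n from rfl]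
    field_simp
  have h2 := congrArg norm this
  rw [norm_mul, norm_mul, norm_neg] at h2
  rw [h2, show orbit lams w0 n + 1 = 1 + orbit lams w0 n by ring]

lemma Dc_ne_zero (hne : ∀ n, orbit lams w0 n ≠ 0)
    (hone : ∀ n, 1 + orbit lams w0 n ≠ 0) (n : ℕ) :
    Dc lams w0 n ≠ 0 := by
  induction n with
  | zero => simp [Dc]
  | succ n ih =>
    rw [show Dc lams w0 (n+1)
      = -(orbit lams w0 n + 1) / orbit lams w0 (n + 1) * Dc lams w0 n from rfl]
    apply mul_ne_zero _ ih
    apply div_ne_zero _ (hne (n+1))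
    rw [neg_ne_zero, show orbit lams w0 n + 1 = 1 + orbit lams w0 n by ring]
    exact hone n

/-- arithmetic helper for the ratio induction step -/
lemma ratio_step {D1 D0 E1 E0 a a2 b b' e1 e2 E : ℝ}
    (hD1 : D1 * a = b * D0) (hE1 : E1 * a2 = b' * E0)
    (hD0 : D0 ≤ E * E0) (hb : b ≤ e1 * b') (ha2 : a2 ≤ e2 * a)
    (ha : 0 < a) (ha20 : 0 < a2) (hD0nn : 0 ≤ D0)
    (he1 : 0 ≤ e1) (hb' : 0 ≤ b') (hE : 0 ≤ E) (hE0 : 0 ≤ E0) :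
    D1 ≤ E * e1 * e2 * E1 := by
  have h1 : (b*D0)*a2 ≤ ((e1*b')*(E*E0))*(e2*a) :=
    mul_le_mul (mul_le_mul hb hD0 hD0nn (mul_nonneg he1 hb')) ha2 (le_of_lt ha20)
      (mul_nonneg (mul_nonneg he1 hb') (mul_nonneg hE hE0))
  have h2 : D1 * (a*a2) ≤ (E*e1*e2*E1) * (a*a2) := by
    calc D1*(a*a2) = (D1*a)*a2 := by ring
      _ = (b*D0)*a2 := by rw [hD1]
      _ ≤ ((e1*b')*(E*E0))*(e2*a) := h1
      _ = (E*e1*e2)*((b'*E0)*a) := by ring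
      _ = (E*e1*e2)*((E1*a2)*a) := by rw [hE1]
      _ = (E*e1*e2*E1)*(a*a2) := by ring
  exact le_of_mul_le_mul_right h2 (by positivity)

/-- helper: if `x ≤ y + d` and `m' ≤ y` then `x ≤ exp (d/m') * y`. -/
lemma close_mul {x y d m' : ℝ} (hxy : x ≤ y + d) (hm : 0 < m') (hmy : m' ≤ y) (hd : 0 ≤ d) :
    x ≤ Real.exp (d / m') * y := by
  have hynn : 0 ≤ y := le_trans (le_of_lt hm) hmy
  have h1 : d ≤ y * (d / m') := by
    have h2 : m' * (d / m') ≤ y * (d / m') := mul_le_mul_of_nonneg_right hmy (by positivity)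
    have h3 : m' * (d / m') = d := by field_simp
    linarith
  have h4 : x ≤ y * (1 + d / m') := by rw [mul_add, mul_one]; linarith
  have h5 : (1 + d / m') ≤ Real.exp (d / m') := by
    have := Real.add_one_le_exp (d / m')
    linarith
  calc x ≤ y * (1 + d / m') := h4
    _ ≤ y * Real.exp (d / m') := mul_le_mul_of_nonneg_left h5 hynn
    _ = Real.exp (d / m') * y := mul_comm _ _

end CorAux

open CorAux in
/-- **Corollary 3.5.** Given `λ₊ > λ₋ > 0`, `C > 0` and `α ∈ (0,1)` there
is `A > 1` such that for any sequences `(λ_n)`, `(λ̂_n)` in `[λ₋, λ₊]` with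
`|λ_n − λ̂_n| < C·αⁿ` for all `n ≥ 1` (with associated orbits staying in the left
half-plane), the derivatives of the affine compositions `G_n`, `Ĝ_n` satisfy
`1/A ≤ |G_n'/Ĝ_n'| ≤ A`. -/
theorem Gmap_deriv_ratio_bounded (lamm lamp C α : ℝ) (h0 : 0 < lamm) (hmp : lamm < lamp)
    (hC : 0 < C) (hα : α ∈ Set.Ioo (0 : ℝ) 1) :
    ∃ A : ℝ, 1 < A ∧ ∀ lams lams' : ℕ → ℝ,
      (∀ n : ℕ, 1 ≤ n → lams n ∈ Set.Icc lamm lamp) →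
      (∀ n : ℕ, 1 ≤ n → lams' n ∈ Set.Icc lamm lamp) →
      (∀ n : ℕ, 1 ≤ n → |lams n - lams' n| < C * α ^ n) →
      ∀ w0 w0' : ℂ,
        (∀ n : ℕ, (orbit lams w0 n).re < 0) →
        (∀ n : ℕ, (orbit lams' w0' n).re < 0) →
        ∀ n : ℕ,
          1 / A ≤ ‖deriv (Gmap lams w0 n) 0 / deriv (Gmap lams' w0' n) 0‖ ∧
          ‖deriv (Gmap lams w0 n) 0 / deriv (Gmap lams' w0' n) 0‖ ≤ A := by
  have hlamp : 0 < lamp := h0.trans hmp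
  set β := Real.sqrt (1 - ((1+lamp)^2)⁻¹) with hβ
  have hβ0 : 0 ≤ β := Real.sqrt_nonneg _
  have hβ1 : β < 1 := by
    rw [hβ]
    refine (Real.sqrt_lt' one_pos).2 ?_
    have : 0 < ((1+lamp)^2)⁻¹ := by positivity
    nlinarith
  set γ := max α β with hγ
  have hγ0 : 0 < γ := lt_of_lt_of_le hα.1 (le_max_left _ _)
  have hγ1 : γ < 1 := max_lt hα.2 hβ1
  set P := 1 + lamp with hP
  have hPpos : (0:ℝ) < P := by rw [hP]; linarith
  set K := P * (C * γ / (1 - γ)) with hK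
  have hKpos : 0 < K := by
    apply mul_pos hPpos
    apply div_pos (by positivity); linarith
  set m := lamm / P with hm
  have hmpos : 0 < m := div_pos h0 hPpos
  set S := (K/m + K) * (1/(1-γ)) with hS
  have hSpos : 0 < S := by
    apply mul_pos
    · positivity
    · apply div_pos one_pos; linarith
  refine ⟨Real.exp S, ?_, ?_⟩
  · have := Real.add_one_le_exp S
    linarith
  intro lams lams' hlam hlam' hdiff w0 w0' hre hre' n
  -- orbit non-vanishing facts
  have hne : ∀ k, orbit lams w0 k ≠ 0 := by
    intro k h
    have := a_ge_one h0 hlam hre k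
    rw [h] at this; simp at this; linarith
  have hne' : ∀ k, orbit lams' w0' k ≠ 0 := by
    intro k h
    have := a_ge_one h0 hlam' hre' k
    rw [h] at this; simp at this; linarith
  -- the orbit distance
  set δ : ℕ → ℝ := fun k => ‖orbit lams w0 k - orbit lams' w0' k‖ with hδ
  have hδnn : ∀ k, 0 ≤ δ k := fun k => norm_nonneg _
  have hdle : ∀ k, δ k ≤ K * γ^k := by
    intro k
    have := delta_le h0 hmp hC hα hlam hlam' hdiff hre hre' k
    rw [hδ]
    calc ‖orbit lams w0 k - orbit lams' w0' k‖
        ≤ (1 + lamp) * (C * max α (Real.sqrt (1 - ((1+lamp)^2)⁻¹))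
            / (1 - max α (Real.sqrt (1 - ((1+lamp)^2)⁻¹))))
          * (max α (Real.sqrt (1 - ((1+lamp)^2)⁻¹))) ^ k := this
      _ = K * γ^k := by rw [hK, hγ, hβ, hP]
  -- the running exponent
  set T : ℕ → ℝ := fun k => ∑ i ∈ Finset.range k, (δ i / m + δ (i+1)) with hT
  have hTnn : ∀ k, 0 ≤ T k := by
    intro k
    apply Finset.sum_nonneg
    intro i _
    have := hδnn i; have := hδnn (i+1)
    positivity
  have hTle : ∀ k, T k ≤ S := by
    intro k
    have hterm : ∀ i ∈ Finset.range k, δ i / m + δ (i+1) ≤ (K/m + K) * γ^i := by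
      intro i _
      have h1 : δ i / m ≤ K*γ^i/m := (div_le_div_iff_of_pos_right hmpos).2 (hdle i)
      have h2 : δ (i+1) ≤ K*γ^(i+1) := hdle (i+1)
      have h3 : K*γ^(i+1) ≤ K*γ^i := by
        apply mul_le_mul_of_nonneg_left _ (le_of_lt hKpos)
        calc γ^(i+1) = γ^i * γ := by ring
          _ ≤ γ^i * 1 := by
              apply mul_le_mul_of_nonneg_left (le_of_lt hγ1) (by positivity)
          _ = γ^i := mul_one _
      have h4 : (K/m + K) * γ^i = K*γ^i/m + K*γ^i := by ring
      linarith
    have hsum1 : T k ≤ ∑ i ∈ Finset.range k, (K/m + K) * γ^i :=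
      Finset.sum_le_sum hterm
    have hsum2 : ∑ i ∈ Finset.range k, (K/m + K) * γ^i = (K/m + K) * ∑ i ∈ Finset.range k, γ^i :=
      (Finset.mul_sum _ _ _).symm
    have hgeo : ∑ i ∈ Finset.range k, γ^i ≤ 1/(1-γ) := by
      rw [le_div_iff₀ (by linarith : (0:ℝ) < 1 - γ)]
      have hgm := geom_sum_mul γ k
      have hγk : (0:ℝ) ≤ γ^k := by positivity
      have e : (∑ i ∈ Finset.range k, γ^i) * (1-γ) = 1 - γ^k := by
        linear_combination -hgm
      linarith
    have hKm : (0:ℝ) ≤ K/m + K := by positivity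
    calc T k ≤ (K/m + K) * ∑ i ∈ Finset.range k, γ^i := by rw [← hsum2]; exact hsum1
      _ ≤ (K/m + K) * (1/(1-γ)) := mul_le_mul_of_nonneg_left hgeo hKm
      _ = S := by rw [hS]
  -- hypotheses for Dc_ne_zero
  have hone : ∀ k, 1 + orbit lams w0 k ≠ 0 := one_add_ne hre
  have hone' : ∀ k, 1 + orbit lams' w0' k ≠ 0 := one_add_ne hre'
  have hDne : Dc lams w0 n ≠ 0 := Dc_ne_zero hne hone n
  have hDne' : Dc lams' w0' n ≠ 0 := Dc_ne_zero hne' hone' n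
  -- the main ratio induction
  have hmain : ∀ k, ‖Dc lams w0 k‖ ≤ Real.exp (T k) * ‖Dc lams' w0' k‖ ∧
      ‖Dc lams' w0' k‖ ≤ Real.exp (T k) * ‖Dc lams w0 k‖ := by
    intro k
    induction k with
    | zero => simp [Dc, hT]
    | succ k ih =>
      have hTsucc : Real.exp (T (k+1))
          = Real.exp (T k) * Real.exp (δ k / m) * Real.exp (δ (k+1) / 1) := by
        rw [show T (k+1) = T k + (δ k / m + δ (k+1)) from Finset.sum_range_succ _ k,
          Real.exp_add, Real.exp_add, div_one]
        ring
      -- norm recurrences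
      have hr1 := norm_Dc_succ k (hne (k+1))
      have hr2 := norm_Dc_succ k (hne' (k+1))
      -- closeness of b's and a's
      have hbb : ‖1 + orbit lams w0 k‖ ≤ ‖1 + orbit lams' w0' k‖ + δ k := by
        have h1 : ‖1 + orbit lams w0 k‖ - ‖1 + orbit lams' w0' k‖
            ≤ ‖(1 + orbit lams w0 k) - (1 + orbit lams' w0' k)‖ := norm_sub_norm_le _ _
        have h2 : (1 + orbit lams w0 k) - (1 + orbit lams' w0' k)
            = orbit lams w0 k - orbit lams' w0' k := by ring
        rw [h2] at h1
        rw [hδ]; dsimp only; linarith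
      have hbb' : ‖1 + orbit lams' w0' k‖ ≤ ‖1 + orbit lams w0 k‖ + δ k := by
        have h1 : ‖1 + orbit lams' w0' k‖ - ‖1 + orbit lams w0 k‖
            ≤ ‖(1 + orbit lams' w0' k) - (1 + orbit lams w0 k)‖ := norm_sub_norm_le _ _
        have h2 : (1 + orbit lams' w0' k) - (1 + orbit lams w0 k)
            = -(orbit lams w0 k - orbit lams' w0' k) := by ring
        rw [h2, norm_neg] at h1
        rw [hδ]; dsimp only; linarith
      have haa : ‖orbit lams w0 (k+1)‖ ≤ ‖orbit lams' w0' (k+1)‖ + δ (k+1) := by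
        have h1 := norm_sub_norm_le (orbit lams w0 (k+1)) (orbit lams' w0' (k+1))
        rw [hδ]; dsimp only; linarith
      have haa' : ‖orbit lams' w0' (k+1)‖ ≤ ‖orbit lams w0 (k+1)‖ + δ (k+1) := by
        have h1 := norm_sub_norm_le (orbit lams' w0' (k+1)) (orbit lams w0 (k+1))
        rw [norm_sub_rev] at h1
        rw [hδ]; dsimp only; linarith
      have hmb : m ≤ ‖1 + orbit lams w0 k‖ := by
        rw [hm, hP]; exact b_ge h0 hlam hre k
      have hmb' : m ≤ ‖1 + orbit lams' w0' k‖ := by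
        rw [hm, hP]; exact b_ge h0 hlam' hre' k
      have ha1 : (0:ℝ) < ‖orbit lams w0 (k+1)‖ :=
        lt_of_lt_of_le one_pos (a_ge_one h0 hlam hre (k+1))
      have ha1' : (0:ℝ) < ‖orbit lams' w0' (k+1)‖ :=
        lt_of_lt_of_le one_pos (a_ge_one h0 hlam' hre' (k+1))
      have hone1 : (1:ℝ) ≤ ‖orbit lams w0 (k+1)‖ := a_ge_one h0 hlam hre (k+1)
      have hone1' : (1:ℝ) ≤ ‖orbit lams' w0' (k+1)‖ := a_ge_one h0 hlam' hre' (k+1)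
      constructor
      · rw [hTsucc]
        refine ratio_step hr1 hr2 ih.1
          (close_mul hbb hmpos hmb' (hδnn k))
          (close_mul haa' one_pos hone1 (hδnn (k+1)))
          ha1 ha1' (norm_nonneg _) (Real.exp_nonneg _) (norm_nonneg _)
          (Real.exp_nonneg _) (norm_nonneg _)
      · rw [hTsucc]
        refine ratio_step hr2 hr1 ih.2
          (close_mul hbb' hmpos hmb (hδnn k))
          (close_mul haa one_pos hone1' (hδnn (k+1)))
          ha1' ha1 (norm_nonneg _) (Real.exp_nonneg _) (norm_nonneg _)
          (Real.exp_nonneg _) (norm_nonneg _)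
  -- conclude
  rw [deriv_Gmap, deriv_Gmap, norm_div]
  have hDpos : (0:ℝ) < ‖Dc lams w0 n‖ := norm_pos_iff.2 hDne
  have hDpos' : (0:ℝ) < ‖Dc lams' w0' n‖ := norm_pos_iff.2 hDne'
  have hApos : (0:ℝ) < Real.exp S := Real.exp_pos _
  have hexpT : Real.exp (T n) ≤ Real.exp S := Real.exp_le_exp.2 (hTle n)
  have h1 : ‖Dc lams w0 n‖ ≤ Real.exp S * ‖Dc lams' w0' n‖ := by
    calc ‖Dc lams w0 n‖ ≤ Real.exp (T n) * ‖Dc lams' w0' n‖ := (hmain n).1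
      _ ≤ Real.exp S * ‖Dc lams' w0' n‖ :=
          mul_le_mul_of_nonneg_right hexpT (norm_nonneg _)
  have h2 : ‖Dc lams' w0' n‖ ≤ Real.exp S * ‖Dc lams w0 n‖ := by
    calc ‖Dc lams' w0' n‖ ≤ Real.exp (T n) * ‖Dc lams w0 n‖ := (hmain n).2
      _ ≤ Real.exp S * ‖Dc lams w0 n‖ :=
          mul_le_mul_of_nonneg_right hexpT (norm_nonneg _)
  constructor
  · rw [div_le_div_iff₀ hApos hDpos', one_mul]
    calc ‖Dc lams' w0' n‖ ≤ Real.exp S * ‖Dc lams w0 n‖ := h2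
      _ = ‖Dc lams w0 n‖ * Real.exp S := mul_comm _ _
  · rw [div_le_iff₀ hDpos']
    calc ‖Dc lams w0 n‖ ≤ Real.exp S * ‖Dc lams' w0' n‖ := h1
      _ = Real.exp S * ‖Dc lams' w0' n‖ := rfl

end
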